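/- Let α > 0, let η be a Borel probability measure on ℝⁿ × ℝᵐ, and let f : ℝⁿ × ℝᵐ → ℝ be Borel measurable such that for every y ∈ ℝᵐ the map x ↦ (1/2)‖x‖² − f(x, y) is α-strongly convex on ℝⁿ. Let T, T* : ℝⁿ × ℝᵐ → ℝⁿ be Borel measurable maps such that for η-almost every (x, y), T*(x, y) is a global minimizer of z ↦ (1/2)‖z − x‖² − f(z, y), and assume (x, y) ↦ (1/2)‖T(x, y) − x‖² − f(T(x, y), y) and (x, y) ↦ (1/2)‖T*(x, y) − x‖² − f(T*(x, y), y) are η-integrable and (x, y) ↦ ‖T(x, y) − T*(x, y)‖² is η-integrable. Denote by δ := ∫ [ (1/2)‖T − x‖² − f(T, y) ] dη − ∫ [ (1/2)‖T* − x‖² − f(T*, y) ] dη ≥ 0 the minimization gap. Then the dual bounded-Lipschitz distance between the pushforwards of η under (x, y) ↦ T(x, y) and under (x, y) ↦ T*(x, y) satisfies d( T_#η, T*_#η ) ≤ √( (2/α)·δ ). -/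

import Mathlib

open MeasureTheory

/-- The dual bounded-Lipschitz distance between Borel probability measures on ℝⁿ:
`d(μ, ν) = sup { |∫ g dμ − ∫ g dν| : |g| ≤ 1 and g is 1-Lipschitz }`. -/
noncomputable def dBL {n : ℕ} (μ ν : Measure (EuclideanSpace ℝ (Fin n))) : ℝ :=
  sSup { r : ℝ | ∃ g : EuclideanSpace ℝ (Fin n) → ℝ,
    (∀ x, |g x| ≤ 1) ∧ (∀ x x', |g x - g x'| ≤ ‖x - x'‖) ∧
    r = |(∫ x, g x ∂μ) - ∫ x, g x ∂ν| }

/-- Strong convexity of a function with a global minimizer yields a quadratic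
lower bound at the minimizer. -/
lemma aux_strong_min {E : Type*} [NormedAddCommGroup E] [InnerProductSpace ℝ E]
    {α : ℝ} (hα : 0 < α) (φ : E → ℝ)
    (hconv : ConvexOn ℝ Set.univ (fun z => φ z - (α / 2) * ‖z‖ ^ 2))
    {zs : E} (hmin : ∀ w, φ zs ≤ φ w) (z : E) :
    (α / 2) * ‖z - zs‖ ^ 2 ≤ φ z - φ zs := by
  set g : E → ℝ := fun w => φ w - (α / 2) * ‖w‖ ^ 2 with hg
  have hge : ∀ u, g u = φ u - (α / 2) * ‖u‖ ^ 2 := fun u => rfl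
  clear_value g
  have key : g zs ≤ g z + α * inner ℝ zs (z - zs) := by
    apply le_of_forall_pos_le_add
    intro ε hε
    by_cases hzz : z = zs
    · subst hzz; simp; linarith
    · have hnz : (0 : ℝ) < ‖z - zs‖ ^ 2 :=
        pow_pos (norm_pos_iff.mpr (sub_ne_zero.mpr hzz)) 2
      set t : ℝ := min 1 (ε / ((α / 2) * ‖z - zs‖ ^ 2)) with ht
      have ht0 : 0 < t := lt_min one_pos (div_pos hε (mul_pos (by positivity) hnz))
      have ht1 : t ≤ 1 := min_le_left _ _
      have htε : (α / 2) * t * ‖z - zs‖ ^ 2 ≤ ε := by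
        have h1 : t ≤ ε / ((α / 2) * ‖z - zs‖ ^ 2) := min_le_right _ _
        have h2 : (0 : ℝ) < (α / 2) * ‖z - zs‖ ^ 2 := by positivity
        calc (α / 2) * t * ‖z - zs‖ ^ 2 = t * ((α / 2) * ‖z - zs‖ ^ 2) := by ring
          _ ≤ (ε / ((α / 2) * ‖z - zs‖ ^ 2)) * ((α / 2) * ‖z - zs‖ ^ 2) := by
              exact mul_le_mul_of_nonneg_right h1 (le_of_lt h2)
          _ = ε := div_mul_cancel₀ ε (ne_of_gt h2)
      set w : E := zs + t • (z - zs) with hw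
      clear_value w
      have hwc : w = (1 - t) • zs + t • z := by
        rw [hw]; rw [smul_sub, sub_smul, one_smul]; abel
      have hconvw : g w ≤ (1 - t) * g zs + t * g z := by
        have := hconv.2 (Set.mem_univ zs) (Set.mem_univ z)
          (by linarith : (0:ℝ) ≤ 1 - t) (le_of_lt ht0) (by ring)
        rw [hwc]
        simpa [smul_eq_mul] using this
      have hminw : φ zs ≤ φ w := hmin w
      have hnormw : ‖w‖ ^ 2 = ‖zs‖ ^ 2 + 2 * t * inner ℝ zs (z - zs) + t ^ 2 * ‖z - zs‖ ^ 2 := by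
        rw [hw, norm_add_sq_real, real_inner_smul_right, norm_smul]
        rw [Real.norm_eq_abs, abs_of_pos ht0]
        ring
      -- φ zs ≤ φ w, expand
      have h3 : g zs + (α / 2) * ‖zs‖ ^ 2 ≤ g w + (α / 2) * ‖w‖ ^ 2 := by
        have e1 : φ zs = g zs + (α / 2) * ‖zs‖ ^ 2 := by rw [hge]; ring
        have e2 : φ w = g w + (α / 2) * ‖w‖ ^ 2 := by rw [hge]; ring
        rw [← e1, ← e2]; exact hminw
      have h4 : t * g zs ≤ t * g z + α * t * inner ℝ zs (z - zs) + (α / 2) * t ^ 2 * ‖z - zs‖ ^ 2 := by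
        rw [hnormw] at h3
        nlinarith [hconvw]
      have h5 : g zs ≤ g z + α * inner ℝ zs (z - zs) + (α / 2) * t * ‖z - zs‖ ^ 2 := by
        have h4' : t * g zs ≤ t * (g z + α * inner ℝ zs (z - zs) + (α / 2) * t * ‖z - zs‖ ^ 2) := by
          calc t * g zs ≤ t * g z + α * t * inner ℝ zs (z - zs) + (α / 2) * t ^ 2 * ‖z - zs‖ ^ 2 := h4
            _ = t * (g z + α * inner ℝ zs (z - zs) + (α / 2) * t * ‖z - zs‖ ^ 2) := by ring
        exact le_of_mul_le_mul_left h4' ht0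
      linarith
  have e1 : φ z = g z + (α / 2) * ‖z‖ ^ 2 := by rw [hge]; ring
  have e2 : φ zs = g zs + (α / 2) * ‖zs‖ ^ 2 := by rw [hge]; ring
  have hin : inner ℝ zs (z - zs) = (inner ℝ zs z : ℝ) - ‖zs‖ ^ 2 := by
    rw [inner_sub_right, real_inner_self_eq_norm_sq]
  have hns : ‖z - zs‖ ^ 2 = ‖z‖ ^ 2 - 2 * (inner ℝ z zs : ℝ) + ‖zs‖ ^ 2 := norm_sub_sq_real z zs
  have hcomm : (inner ℝ z zs : ℝ) = inner ℝ zs z := real_inner_comm zs z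
  rw [e1, e2, hns, hcomm]
  rw [hin] at key
  nlinarith [key]

theorem stmt_9 {n m : ℕ} (α : ℝ) (hα : 0 < α)
    (η : Measure (EuclideanSpace ℝ (Fin n) × EuclideanSpace ℝ (Fin m)))
    (hη : IsProbabilityMeasure η)
    (f : EuclideanSpace ℝ (Fin n) × EuclideanSpace ℝ (Fin m) → ℝ)
    (hf : Measurable f)
    (hconv : ∀ y : EuclideanSpace ℝ (Fin m),
      ConvexOn ℝ Set.univ
        (fun x : EuclideanSpace ℝ (Fin n) =>
          (1 / 2) * ‖x‖ ^ 2 - f (x, y) - (α / 2) * ‖x‖ ^ 2))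
    (T Tstar : EuclideanSpace ℝ (Fin n) × EuclideanSpace ℝ (Fin m) →
      EuclideanSpace ℝ (Fin n))
    (hT : Measurable T) (hTstar : Measurable Tstar)
    (hmin : ∀ᵐ p ∂η, ∀ z : EuclideanSpace ℝ (Fin n),
      (1 / 2) * ‖Tstar p - p.1‖ ^ 2 - f (Tstar p, p.2) ≤
        (1 / 2) * ‖z - p.1‖ ^ 2 - f (z, p.2))
    (hintT : Integrable (fun p => (1 / 2) * ‖T p - p.1‖ ^ 2 - f (T p, p.2)) η)
    (hintTstar : Integrable
      (fun p => (1 / 2) * ‖Tstar p - p.1‖ ^ 2 - f (Tstar p, p.2)) η)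
    (hintdiff : Integrable (fun p => ‖T p - Tstar p‖ ^ 2) η)
    (δ : ℝ)
    (hδ : δ = (∫ p, ((1 / 2) * ‖T p - p.1‖ ^ 2 - f (T p, p.2)) ∂η) -
      ∫ p, ((1 / 2) * ‖Tstar p - p.1‖ ^ 2 - f (Tstar p, p.2)) ∂η) :
    dBL (η.map T) (η.map Tstar) ≤ Real.sqrt ((2 / α) * δ) := by
  -- pointwise a.e. strong convexity bound
  have hpt : ∀ᵐ p ∂η, (α / 2) * ‖T p - Tstar p‖ ^ 2 ≤
      ((1 / 2) * ‖T p - p.1‖ ^ 2 - f (T p, p.2)) -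
      ((1 / 2) * ‖Tstar p - p.1‖ ^ 2 - f (Tstar p, p.2)) := by
    filter_upwards [hmin] with p hp
    have hφconv : ConvexOn ℝ Set.univ
        (fun z : EuclideanSpace ℝ (Fin n) =>
          ((1 / 2) * ‖z - p.1‖ ^ 2 - f (z, p.2)) - (α / 2) * ‖z‖ ^ 2) := by
      have haff : ConvexOn ℝ Set.univ
          (fun z : EuclideanSpace ℝ (Fin n) =>
            (1 / 2) * ‖p.1‖ ^ 2 - inner ℝ z p.1) := by
        refine ⟨convex_univ, ?_⟩
        intro u _ v _ a b ha hb hab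
        simp only [inner_add_left, real_inner_smul_left, smul_eq_mul]
        nlinarith [hab]
      have hsum := (hconv p.2).add haff
      refine (congrArg (ConvexOn ℝ Set.univ) ?_).mpr hsum
      funext z
      simp only [Pi.add_apply]
      rw [norm_sub_sq_real]
      ring
    exact aux_strong_min hα (fun z => (1 / 2) * ‖z - p.1‖ ^ 2 - f (z, p.2))
      hφconv hp (T p)
  -- integrate
  set I2 : ℝ := ∫ p, ‖T p - Tstar p‖ ^ 2 ∂η with hI2
  have hI2nonneg : 0 ≤ I2 := integral_nonneg fun p => sq_nonneg _
  have hint1 : (α / 2) * I2 ≤ δ := by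
    rw [hδ, ← integral_sub hintT hintTstar, hI2, ← integral_const_mul]
    exact integral_mono_ae (hintdiff.const_mul _) (hintT.sub hintTstar) hpt
  have hI2le : I2 ≤ (2 / α) * δ := by
    rw [div_mul_eq_mul_div, le_div_iff₀ hα]
    nlinarith [hint1]
  have hδpos : 0 ≤ (2 / α) * δ := le_trans (by positivity) hI2le
  -- L¹ bound via Cauchy–Schwarz (variance nonnegativity)
  set h : EuclideanSpace ℝ (Fin n) × EuclideanSpace ℝ (Fin m) → ℝ :=
    fun p => ‖T p - Tstar p‖ with hh
  have hmeas : Measurable h := (hT.sub hTstar).norm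
  have hmem2 : MemLp h 2 η := by
    refine (memLp_two_iff_integrable_sq hmeas.aestronglyMeasurable).2 ?_
    have : (fun p => (h p) ^ 2) = fun p => ‖T p - Tstar p‖ ^ 2 := rfl
    simpa [Pi.pow_apply] using hintdiff
  set I1 : ℝ := ∫ p, h p ∂η with hI1
  have hI1nonneg : 0 ≤ I1 := integral_nonneg fun p => norm_nonneg _
  have hsq : I1 ^ 2 ≤ I2 := by
    have hv := ProbabilityTheory.variance_nonneg h η
    rw [ProbabilityTheory.variance_eq_sub hmem2] at hv
    have he : (∫ p, (h ^ 2) p ∂η) = I2 := by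
      simp only [Pi.pow_apply]; rfl
    rw [he] at hv
    linarith
  have hI1le : I1 ≤ Real.sqrt ((2 / α) * δ) := by
    rw [Real.le_sqrt hI1nonneg hδpos]
    exact le_trans hsq hI2le
  -- bound the supremum
  apply Real.sSup_le _ (Real.sqrt_nonneg _)
  rintro r ⟨g, hgb, hglip, rfl⟩
  have hlip : LipschitzWith 1 g := by
    apply LipschitzWith.of_dist_le_mul
    intro a b
    rw [Real.dist_eq, dist_eq_norm]
    simpa using hglip a b
  have hgc : Continuous g := hlip.continuous
  have hmapT : (∫ x, g x ∂(η.map T)) = ∫ p, g (T p) ∂η :=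
    integral_map hT.aemeasurable hgc.aestronglyMeasurable
  have hmapTs : (∫ x, g x ∂(η.map Tstar)) = ∫ p, g (Tstar p) ∂η :=
    integral_map hTstar.aemeasurable hgc.aestronglyMeasurable
  have hintgT : Integrable (fun p => g (T p)) η := by
    refine Integrable.mono' (integrable_const 1)
      ((hgc.measurable.comp hT).aestronglyMeasurable) ?_
    filter_upwards with p
    rw [Real.norm_eq_abs]; exact hgb (T p)
  have hintgTs : Integrable (fun p => g (Tstar p)) η := by
    refine Integrable.mono' (integrable_const 1)
      ((hgc.measurable.comp hTstar).aestronglyMeasurable) ?_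
    filter_upwards with p
    rw [Real.norm_eq_abs]; exact hgb (Tstar p)
  have hinth : Integrable h η := hmem2.integrable one_le_two
  rw [hmapT, hmapTs, ← integral_sub hintgT hintgTs]
  calc |∫ p, (g (T p) - g (Tstar p)) ∂η| ≤ ∫ p, |g (T p) - g (Tstar p)| ∂η := by
        simpa [Real.norm_eq_abs] using
          norm_integral_le_integral_norm (μ := η) (fun p => g (T p) - g (Tstar p))
    _ ≤ ∫ p, h p ∂η := by
        apply integral_mono ((hintgT.sub hintgTs).abs) hinth
        intro p
        exact hglip (T p) (Tstar p)
    _ ≤ Real.sqrt ((2 / α) * δ) := hI1le
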